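/- For each n, let TPR_n, δ_n ∈ [0,1], and let μ_n be the probability measure on {0,1}×{0,1} given by μ_n({(1,1)}) = TPR_n/2, μ_n({(1,0)}) = (1−TPR_n)/2, μ_n({(0,1)}) = δ_n/2, μ_n({(0,0)}) = (1−δ_n)/2 (the joint law of the safety label, uniform prior, and the gate decision). Let I_n = KL(μ_n ‖ μ_n^{(1)} ⊗ μ_n^{(2)}) be the mutual information, i.e., the Kullback–Leibler divergence between μ_n and the product of its two marginals. Then for every N ≥ 1 with ∑_{n=1}^N I_n ≤ I₀: ∑_{n=1}^N TPR_n ≤ ∑_{n=1}^N δ_n + √(2·N·I₀). (Information-theoretic finite-horizon bound: per-step, Pinsker's inequality gives |TPR_n − δ_n| ≤ √(2 I_n), and Cauchy–Schwarz gives the summed bound.) -/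

import Mathlib

open MeasureTheory
open scoped ENNReal NNReal

/-- Kullback–Leibler divergence between two measures on a finite discrete
measurable space, `KL(μ‖ν) = ∑ₐ μ{a} · log (μ{a}/ν{a})`. -/
noncomputable def discreteKL {α : Type*} [Fintype α] [MeasurableSpace α]
    [MeasurableSingletonClass α] (μ ν : Measure α) : ℝ :=
  ∑ a : α, (μ {a}).toReal * Real.log ((μ {a}).toReal / (ν {a}).toReal)

/-- The joint law on `{safe, unsafe} × {accept, reject}` (encoded as
`Bool × Bool`, with `true = safe`/`accept`) of the safety label under the
uniform prior and the gate decision: mass `TPR/2` at `(1,1)`, `(1-TPR)/2` at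
`(1,0)`, `δ/2` at `(0,1)`, `(1-δ)/2` at `(0,0)`. -/
noncomputable def jointLaw (tpr δ : ℝ) : Measure (Bool × Bool) :=
  ENNReal.ofReal (tpr / 2) • Measure.dirac (true, true) +
    ENNReal.ofReal ((1 - tpr) / 2) • Measure.dirac (true, false) +
    ENNReal.ofReal (δ / 2) • Measure.dirac (false, true) +
    ENNReal.ofReal ((1 - δ) / 2) • Measure.dirac (false, false)

instance (t d : ℝ) : SFinite (jointLaw t d) := by unfold jointLaw; infer_instance

lemma kl_eq (t d : ℝ) (ht0 : 0 ≤ t) (ht1 : t ≤ 1) (hd0 : 0 ≤ d) (hd1 : d ≤ 1) :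
    discreteKL (jointLaw t d) ((jointLaw t d).fst.prod ((jointLaw t d).snd))
      = (t/2) * Real.log (t / ((t+d)/2))
      + ((1-t)/2) * Real.log ((1-t) / (1-(t+d)/2))
      + (d/2) * Real.log (d / ((t+d)/2))
      + ((1-d)/2) * Real.log ((1-d) / (1-(t+d)/2)) := by
  have h1t : (0:ℝ) ≤ 1 - t := by linarith
  have h1d : (0:ℝ) ≤ 1 - d := by linarith
  have hfst : ∀ a : Bool, (jointLaw t d).fst {a} = ENNReal.ofReal (1/2) := by
    intro a
    rw [Measure.fst_apply (measurableSet_singleton _)]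
    cases a <;>
    · simp [jointLaw, Measure.dirac_apply, Set.indicator]
      rw [← ENNReal.ofReal_add (by linarith) (by linarith)]
      ring_nf
      rw [ENNReal.ofReal_div_of_pos (by norm_num)]; simp
  have hsndT : (jointLaw t d).snd {true} = ENNReal.ofReal ((t+d)/2) := by
    rw [Measure.snd_apply (measurableSet_singleton _)]
    simp [jointLaw, Measure.dirac_apply, Set.indicator]
    rw [← ENNReal.ofReal_add (by linarith) (by linarith)]
    ring_nf
  have hsndF : (jointLaw t d).snd {false} = ENNReal.ofReal (1-(t+d)/2) := by
    rw [Measure.snd_apply (measurableSet_singleton _)]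
    simp [jointLaw, Measure.dirac_apply, Set.indicator]
    rw [← ENNReal.ofReal_add (by linarith) (by linarith)]
    ring_nf
  have hprod : ∀ a b : Bool, ((jointLaw t d).fst.prod ((jointLaw t d).snd)) {(a,b)}
      = (jointLaw t d).fst {a} * (jointLaw t d).snd {b} := by
    intro a b
    rw [← Set.singleton_prod_singleton, Measure.prod_prod]
  have hhalf : (0:ℝ) ≤ 1/2 := by norm_num
  unfold discreteKL
  rw [Fintype.sum_prod_type]
  simp only [Fintype.sum_bool, hprod, hfst, hsndT, hsndF]
  have hjTT : jointLaw t d {(true, true)} = ENNReal.ofReal (t/2) := by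
    simp [jointLaw, Measure.dirac_apply]
  have hjTF : jointLaw t d {(true, false)} = ENNReal.ofReal ((1-t)/2) := by
    simp [jointLaw, Measure.dirac_apply]
  have hjFT : jointLaw t d {(false, true)} = ENNReal.ofReal (d/2) := by
    simp [jointLaw, Measure.dirac_apply]
  have hjFF : jointLaw t d {(false, false)} = ENNReal.ofReal ((1-d)/2) := by
    simp [jointLaw, Measure.dirac_apply]
  rw [hjTT, hjTF, hjFT, hjFF,
    ← ENNReal.ofReal_mul hhalf, ← ENNReal.ofReal_mul hhalf,
    ENNReal.toReal_ofReal (by linarith), ENNReal.toReal_ofReal (by linarith),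
    ENNReal.toReal_ofReal (by linarith), ENNReal.toReal_ofReal (by linarith),
    ENNReal.toReal_ofReal (by positivity), ENNReal.toReal_ofReal (by positivity)]
  have hdiv : ∀ a b : ℝ, (a/2)/(1/2*b) = a/b := by
    intro a b
    rcases eq_or_ne b 0 with h | h
    · simp [h]
    · field_simp
  rw [hdiv, hdiv, hdiv, hdiv]
  ring

lemma artanh_ge (u : ℝ) (h0 : 0 ≤ u) (h1 : u < 1) :
    2*u ≤ Real.log (1+u) - Real.log (1-u) := by
  set g : ℝ → ℝ := fun x => Real.log (1+x) - Real.log (1-x) - 2*x with hg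
  have key : MonotoneOn g (Set.Icc 0 u) := by
    apply monotoneOn_of_deriv_nonneg (convex_Icc 0 u)
    · apply ContinuousOn.sub (ContinuousOn.sub ?_ ?_) (by fun_prop)
      · apply (Real.continuousOn_log.comp (by fun_prop))
        intro x hx
        simp only [Set.mem_Icc] at hx
        simp only [Set.mem_compl_iff, Set.mem_singleton_iff]
        intro hc; nlinarith [hx.1]
      · apply (Real.continuousOn_log.comp (by fun_prop))
        intro x hx
        simp only [Set.mem_Icc] at hx
        simp only [Set.mem_compl_iff, Set.mem_singleton_iff]
        intro hc; nlinarith [hx.2]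
    · intro x hx
      rw [interior_Icc] at hx
      obtain ⟨hx0, hxu⟩ := hx
      have h1x : (0:ℝ) < 1 + x := by linarith
      have h2x : (0:ℝ) < 1 - x := by linarith
      have hderiv : HasDerivAt g (1/(1+x) - (-1)/(1-x) - 2) x := by
        have d1 : HasDerivAt (fun y : ℝ => 1 + y) 1 x := by
          simpa using (hasDerivAt_id x).const_add 1
        have d2 : HasDerivAt (fun y : ℝ => 1 - y) (-1) x := by
          simpa using (hasDerivAt_id x).const_sub 1
        have l1 := d1.log (ne_of_gt h1x)
        have l2 := d2.log (ne_of_gt h2x)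
        exact ((l1.sub l2).sub ((hasDerivAt_id x).const_mul 2)).congr_deriv (by ring)
      exact hderiv.differentiableAt.differentiableWithinAt
    · intro x hx
      rw [interior_Icc] at hx
      obtain ⟨hx0, hxu⟩ := hx
      have h1x : (0:ℝ) < 1 + x := by linarith
      have h2x : (0:ℝ) < 1 - x := by linarith
      have hderiv : HasDerivAt g (1/(1+x) - (-1)/(1-x) - 2) x := by
        have d1 : HasDerivAt (fun y : ℝ => 1 + y) 1 x := by
          simpa using (hasDerivAt_id x).const_add 1
        have d2 : HasDerivAt (fun y : ℝ => 1 - y) (-1) x := by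
          simpa using (hasDerivAt_id x).const_sub 1
        have l1 := d1.log (ne_of_gt h1x)
        have l2 := d2.log (ne_of_gt h2x)
        exact ((l1.sub l2).sub ((hasDerivAt_id x).const_mul 2)).congr_deriv (by ring)
      rw [hderiv.deriv]
      have heq : 1/(1+x) - (-1)/(1-x) = 2/((1+x)*(1-x)) := by
        field_simp; ring
      rw [heq]
      have hp : (0:ℝ) < (1+x)*(1-x) := mul_pos h1x h2x
      have hle : (1+x)*(1-x) ≤ 1 := by nlinarith
      have h2le : (2:ℝ) ≤ 2/((1+x)*(1-x)) := by
        rw [le_div_iff₀ hp]; nlinarith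
      linarith
  have := key (Set.left_mem_Icc.mpr h0) (Set.right_mem_Icc.mpr h0) h0
  simp only [hg] at this
  simp only [add_zero, sub_zero, Real.log_one, mul_zero] at this
  linarith

lemma pair_lt (q s : ℝ) (hq : 0 < q) (hs0 : 0 ≤ s) (hsq : s < q) :
    s^2/q ≤ (q+s)*(Real.log (q+s) - Real.log q) + (q-s)*(Real.log (q-s) - Real.log q) := by
  set f : ℝ → ℝ := fun x =>
    (q+x)*(Real.log (q+x) - Real.log q) + (q-x)*(Real.log (q-x) - Real.log q) - x^2/q with hf
  have hasD : ∀ x : ℝ, 0 < q + x → 0 < q - x →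
      HasDerivAt f (Real.log (q+x) - Real.log (q-x) - 2*x/q) x := by
    intro x hqx hqx'
    have d1 : HasDerivAt (fun y : ℝ => q + y) 1 x := by
      simpa using (hasDerivAt_id x).const_add q
    have d2 : HasDerivAt (fun y : ℝ => q - y) (-1) x := by
      simpa using (hasDerivAt_id x).const_sub q
    have l1 : HasDerivAt (fun y : ℝ => Real.log (q+y) - Real.log q) (1/(q+x)) x := by
      simpa using (d1.log (ne_of_gt hqx)).sub_const (Real.log q)
    have l2 : HasDerivAt (fun y : ℝ => Real.log (q-y) - Real.log q) ((-1)/(q-x)) x := by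
      simpa using (d2.log (ne_of_gt hqx')).sub_const (Real.log q)
    have t1 := d1.mul l1
    have t2 := d2.mul l2
    have t3 : HasDerivAt (fun y : ℝ => y^2/q) (2*x/q) x := by
      have := (hasDerivAt_pow 2 x).div_const q
      simpa [mul_comm] using this
    have := (t1.add t2).sub t3
    refine this.congr_deriv ?_
    field_simp [ne_of_gt hqx, ne_of_gt hqx']
    ring
  have key : MonotoneOn f (Set.Icc 0 s) := by
    apply monotoneOn_of_deriv_nonneg (convex_Icc 0 s)
    · intro x hx
      simp only [Set.mem_Icc] at hx
      exact (hasD x (by linarith) (by linarith)).differentiableAt.continuousAt.continuousWithinAt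
    · intro x hx
      rw [interior_Icc] at hx
      exact (hasD x (by linarith [hx.1]) (by linarith [hx.2])).differentiableAt.differentiableWithinAt
    · intro x hx
      rw [interior_Icc] at hx
      obtain ⟨hx0, hxs⟩ := hx
      rw [(hasD x (by linarith) (by linarith)).deriv]
      have hu0 : 0 ≤ x/q := by positivity
      have hu1 : x/q < 1 := (div_lt_one hq).mpr (by linarith)
      have hart := artanh_ge (x/q) hu0 hu1
      have e1 : Real.log (q+x) = Real.log q + Real.log (1+x/q) := by
        rw [← Real.log_mul (ne_of_gt hq) (by positivity)]
        congr 1; field_simp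
      have e2 : Real.log (q-x) = Real.log q + Real.log (1-x/q) := by
        have h1 : (0:ℝ) < 1 - x/q := by linarith
        rw [← Real.log_mul (ne_of_gt hq) (ne_of_gt h1)]
        congr 1; field_simp
      rw [e1, e2]
      have : 2*(x/q) = 2*x/q := by ring
      linarith [hart, this ▸ hart]
  have h0mem : (0:ℝ) ∈ Set.Icc 0 s := Set.left_mem_Icc.mpr hs0
  have hsmem : s ∈ Set.Icc 0 s := Set.right_mem_Icc.mpr hs0
  have := key h0mem hsmem hs0
  simp only [hf] at this
  simp only [add_zero, sub_zero, Real.log_one, mul_zero, sub_self] at this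
  have h00 : (0:ℝ)^2/q = 0 := by simp
  nlinarith [this]

lemma pair (q s : ℝ) (hq : 0 < q) (hs0 : 0 ≤ s) (hsq : s ≤ q) :
    s^2/q ≤ (q+s)*Real.log ((q+s)/q) + (q-s)*Real.log ((q-s)/q) := by
  rcases lt_or_eq_of_le hsq with h | h
  · have hqs : (0:ℝ) < q + s := by linarith
    have hqs' : (0:ℝ) < q - s := by linarith
    rw [Real.log_div (ne_of_gt hqs) (ne_of_gt hq), Real.log_div (ne_of_gt hqs') (ne_of_gt hq)]
    exact pair_lt q s hq hs0 h
  · rw [h]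
    rw [sub_self, zero_mul, add_zero]
    have e1 : (q+q)/q = 2 := by field_simp; ring
    rw [e1]
    have e2 : q^2/q = q := by
      rw [sq, mul_div_assoc, div_self (ne_of_gt hq), mul_one]
    rw [e2]
    nlinarith [Real.log_two_gt_d9]

lemma pinsker_real (t d : ℝ) (ht0 : 0 ≤ t) (ht1 : t ≤ 1) (hd0 : 0 ≤ d) (hd1 : d ≤ 1)
    (hdt : d ≤ t) :
    (t-d)^2 ≤ t * Real.log (t / ((t+d)/2))
      + (1-t) * Real.log ((1-t) / (1-(t+d)/2))
      + d * Real.log (d / ((t+d)/2))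
      + (1-d) * Real.log ((1-d) / (1-(t+d)/2)) := by
  rcases eq_or_lt_of_le ht0 with h | htpos
  · -- t = 0 hence d = 0
    have ht : t = 0 := h.symm
    have hd : d = 0 := le_antisymm (ht ▸ hdt) hd0
    simp [ht, hd]
  rcases eq_or_lt_of_le hd1 with h | hdlt
  · -- d = 1 hence t = 1
    have hd : d = 1 := h
    have ht : t = 1 := le_antisymm ht1 (hd ▸ hdt)
    norm_num [ht, hd]
  set q : ℝ := (t+d)/2 with hqdef
  have hq : 0 < q := by simp only [hqdef]; linarith
  have h1q : 0 < 1 - q := by simp only [hqdef]; linarith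
  set s : ℝ := (t-d)/2 with hsdef
  have hs0 : 0 ≤ s := by simp only [hsdef]; linarith
  have hsq : s ≤ q := by simp only [hsdef, hqdef]; linarith
  have hsq' : s ≤ 1 - q := by simp only [hsdef, hqdef]; linarith
  have P1 := pair q s hq hs0 hsq
  have P2 := pair (1-q) s h1q hs0 hsq'
  have e1 : q + s = t := by simp only [hqdef, hsdef]; ring
  have e2 : q - s = d := by simp only [hqdef, hsdef]; ring
  have e3 : (1-q) + s = 1 - d := by simp only [hqdef, hsdef]; ring
  have e4 : (1-q) - s = 1 - t := by simp only [hqdef, hsdef]; ring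
  rw [e1, e2] at P1
  rw [e3, e4] at P2
  have hcs : 4*s^2 ≤ s^2/q + s^2/(1-q) := by
    rw [div_add_div _ _ (ne_of_gt hq) (ne_of_gt h1q), le_div_iff₀ (mul_pos hq h1q)]
    nlinarith [sq_nonneg (s*(2*q-1))]
  have hts : (t-d)^2 = 4*s^2 := by simp only [hsdef]; ring
  linarith

lemma step_bound (t d : ℝ) (ht0 : 0 ≤ t) (ht1 : t ≤ 1) (hd0 : 0 ≤ d) (hd1 : d ≤ 1) :
    (t-d)^2 ≤ 2 * discreteKL (jointLaw t d)
      ((jointLaw t d).fst.prod ((jointLaw t d).snd)) := by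
  rw [kl_eq t d ht0 ht1 hd0 hd1]
  rcases le_total d t with h | h
  · have := pinsker_real t d ht0 ht1 hd0 hd1 h
    linarith
  · have := pinsker_real d t hd0 hd1 ht0 ht1 h
    rw [show d + t = t + d from add_comm d t] at this
    have hsq : (d-t)^2 = (t-d)^2 := by ring
    linarith

/-- Information-theoretic finite-horizon bound: if `I n` is the mutual
information of the gate's channel at step `n` (the KL divergence between the
joint law and the product of its marginals) and `∑_{n<N} I n ≤ I₀`, then
`∑_{n<N} TPR_n ≤ ∑_{n<N} δ_n + √(2·N·I₀)`. -/
theorem info_theoretic_finite_horizon_bound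
    (TPR δ : ℕ → ℝ)
    (hTPR : ∀ n, TPR n ∈ Set.Icc (0 : ℝ) 1) (hδ : ∀ n, δ n ∈ Set.Icc (0 : ℝ) 1)
    (I : ℕ → ℝ)
    (hI : ∀ n, I n = discreteKL (jointLaw (TPR n) (δ n))
      ((jointLaw (TPR n) (δ n)).fst.prod ((jointLaw (TPR n) (δ n)).snd)))
    (I₀ : ℝ) (N : ℕ) (hN : 1 ≤ N)
    (hbudget : ∑ n ∈ Finset.range N, I n ≤ I₀) :
    ∑ n ∈ Finset.range N, TPR n
      ≤ ∑ n ∈ Finset.range N, δ n + Real.sqrt (2 * N * I₀) := by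
  have hstep : ∀ n, (TPR n - δ n)^2 ≤ 2 * I n := by
    intro n
    rw [hI n]
    exact step_bound _ _ (hTPR n).1 (hTPR n).2 (hδ n).1 (hδ n).2
  have hInonneg : ∀ n, 0 ≤ I n := by
    intro n
    nlinarith [hstep n, sq_nonneg (TPR n - δ n)]
  have habs : ∀ n, TPR n - δ n ≤ Real.sqrt (2 * I n) := by
    intro n
    calc TPR n - δ n ≤ |TPR n - δ n| := le_abs_self _
    _ ≤ Real.sqrt (2 * I n) := Real.abs_le_sqrt (hstep n)
  have hsum : ∑ n ∈ Finset.range N, (TPR n - δ n)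
      ≤ ∑ n ∈ Finset.range N, Real.sqrt (2 * I n) :=
    Finset.sum_le_sum fun n _ => habs n
  have hcs : (∑ n ∈ Finset.range N, Real.sqrt (2 * I n))^2
      ≤ N * ∑ n ∈ Finset.range N, (2 * I n) := by
    have := sq_sum_le_card_mul_sum_sq (s := Finset.range N)
      (f := fun n => Real.sqrt (2 * I n))
    simp only [Finset.card_range] at this
    calc (∑ n ∈ Finset.range N, Real.sqrt (2 * I n))^2
        ≤ N * ∑ n ∈ Finset.range N, (Real.sqrt (2 * I n))^2 := this
      _ = N * ∑ n ∈ Finset.range N, (2 * I n) := by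
          congr 1
          apply Finset.sum_congr rfl
          intro n _
          rw [Real.sq_sqrt (by linarith [hInonneg n])]
  have hsqrt_nonneg : 0 ≤ ∑ n ∈ Finset.range N, Real.sqrt (2 * I n) :=
    Finset.sum_nonneg fun n _ => Real.sqrt_nonneg _
  have hI0 : 0 ≤ I₀ := le_trans (Finset.sum_nonneg fun n _ => hInonneg n) hbudget
  have hfinal : ∑ n ∈ Finset.range N, Real.sqrt (2 * I n)
      ≤ Real.sqrt (2 * N * I₀) := by
    rw [Real.le_sqrt hsqrt_nonneg (by positivity)]
    calc (∑ n ∈ Finset.range N, Real.sqrt (2 * I n))^2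
        ≤ N * ∑ n ∈ Finset.range N, (2 * I n) := hcs
      _ = N * (2 * ∑ n ∈ Finset.range N, I n) := by rw [← Finset.mul_sum]
      _ ≤ N * (2 * I₀) := by
          apply mul_le_mul_of_nonneg_left (by linarith) (by positivity)
      _ = 2 * N * I₀ := by ring
  have hdist : ∑ n ∈ Finset.range N, (TPR n - δ n)
      = ∑ n ∈ Finset.range N, TPR n - ∑ n ∈ Finset.range N, δ n :=
    Finset.sum_sub_distrib _ _
  linarith
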